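/- For 1 < p < 3/2, the integral ∫_{E_1} (t²/s²)^p dt ds over the unit heat ball E_1 = {(s,t) : −1 < s < 0, t² < 2s ln(−s)/1} equals (2^{p+3/2}/(2p+1)) · Γ(p+3/2)/(3/2 − p)^{p+3/2}, where Γ is the gamma function; in particular it is finite. -/

import Mathlib

open MeasureTheory Set Real

/-- The unit heat ball. -/
def unitHeatBall : Set (ℝ × ℝ) :=
  {p : ℝ × ℝ | -1 < p.1 ∧ p.1 < 0 ∧ p.2 ^ 2 < 2 * p.1 * Real.log (-p.1)}

/-- Even functions: interval integral over `[-a, a]` is twice that over `[0, a]`. -/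
lemma even_intervalIntegral {f : ℝ → ℝ} (hf : Continuous f) (heven : ∀ x, f (-x) = f x)
    (a : ℝ) : ∫ x in (-a)..a, f x = 2 * ∫ x in (0:ℝ)..a, f x := by
  have h1 : ∫ x in (-a)..(0:ℝ), f x = ∫ x in (0:ℝ)..a, f x := by
    have := intervalIntegral.integral_comp_neg (a := (0:ℝ)) (b := a) f
    simp only [heven, neg_zero] at this
    exact this.symm
  rw [← intervalIntegral.integral_add_adjacent_intervals (a := -a) (b := 0) (c := a)
    (hf.intervalIntegrable _ _) (hf.intervalIntegrable _ _), h1, two_mul]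

/-- The Gamma-type integral on `Ioi 0`. -/
lemma gamma_side (p : ℝ) (hp1 : 1 < p) (hp2 : p < 3 / 2) :
    IntegrableOn (fun u : ℝ => u ^ (p + 1/2) * Real.exp (-((3/2 - p) * u))) (Ioi 0) ∧
    ∫ u in Ioi (0:ℝ), u ^ (p + 1/2) * Real.exp (-((3/2 - p) * u))
      = Real.Gamma (p + 3/2) / (3/2 - p) ^ (p + 3/2) := by
  have hr : (0:ℝ) < 3/2 - p := by linarith
  have ha : (0:ℝ) < p + 3/2 := by linarith
  have hexp : (p + 1/2 : ℝ) = p + 3/2 - 1 := by ring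
  constructor
  · rw [hexp]
    have h1 : IntegrableOn (fun x : ℝ => Real.exp (-x) * x ^ (p + 3/2 - 1)) (Ioi 0) :=
      Real.GammaIntegral_convergent ha
    have h2 : IntegrableOn (fun u : ℝ => Real.exp (-((3/2 - p) * u)) *
        ((3/2 - p) * u) ^ (p + 3/2 - 1)) (Ioi 0) := by
      have := (integrableOn_Ioi_comp_mul_left_iff
        (fun x : ℝ => Real.exp (-x) * x ^ (p + 3/2 - 1)) 0 hr).2
      simpa using this (by simpa using h1)
    have h3 := h2.const_mul (((3/2 - p) ^ (p + 3/2 - 1))⁻¹)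
    refine IntegrableOn.congr_fun h3 (fun u hu => ?_) measurableSet_Ioi
    have hu0 : (0:ℝ) ≤ u := le_of_lt hu
    rw [Real.mul_rpow hr.le hu0]
    have hpow : ((3/2 - p) ^ (p + 3/2 - 1) : ℝ) ≠ 0 :=
      (Real.rpow_pos_of_pos hr _).ne'
    have hre : ((3/2 - p) ^ (p + 3/2 - 1) : ℝ)⁻¹ * (Real.exp (-((3/2 - p) * u)) *
          ((3/2 - p) ^ (p + 3/2 - 1) * u ^ (p + 3/2 - 1)))
        = (((3/2 - p) ^ (p + 3/2 - 1) : ℝ)⁻¹ * (3/2 - p) ^ (p + 3/2 - 1)) *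
          (u ^ (p + 3/2 - 1) * Real.exp (-((3/2 - p) * u))) := by ring
    rw [hre, inv_mul_cancel₀ hpow, one_mul]
  · rw [hexp]
    rw [Real.integral_rpow_mul_exp_neg_mul_Ioi ha hr, one_div, Real.inv_rpow hr.le,
      inv_mul_eq_div]

/-- The sigma integral on `Ioo 0 1` via the substitution `σ = exp (-u)`. -/
lemma sigma_side (p : ℝ) (hp1 : 1 < p) (hp2 : p < 3 / 2) :
    IntegrableOn (fun σ : ℝ => σ ^ (1/2 - p) * (-Real.log σ) ^ (p + 1/2)) (Ioo 0 1) ∧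
    ∫ σ in Ioo (0:ℝ) 1, σ ^ (1/2 - p) * (-Real.log σ) ^ (p + 1/2)
      = Real.Gamma (p + 3/2) / (3/2 - p) ^ (p + 3/2) := by
  set H : ℝ → ℝ := fun σ => σ ^ (1/2 - p) * (-Real.log σ) ^ (p + 1/2) with hH
  have himg : (fun u : ℝ => Real.exp (-u)) '' Ioi 0 = Ioo 0 1 := by
    ext x
    constructor
    · rintro ⟨u, hu, rfl⟩
      exact ⟨Real.exp_pos _, by rw [Real.exp_lt_one_iff]; simpa using hu⟩
    · rintro ⟨hx0, hx1⟩
      exact ⟨-Real.log x, by simpa using Real.log_neg hx0 hx1,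
        by simp [Real.exp_log hx0]⟩
  have hderiv : ∀ u ∈ Ioi (0:ℝ), HasDerivWithinAt (fun u : ℝ => Real.exp (-u))
      (-Real.exp (-u)) (Ioi 0) u := by
    intro u _
    have h := (Real.hasDerivAt_exp (-u)).comp u (hasDerivAt_neg u)
    simpa [mul_comm, Function.comp_def] using h.hasDerivWithinAt
  have hinj : InjOn (fun u : ℝ => Real.exp (-u)) (Ioi 0) :=
    (Real.exp_injective.comp neg_injective).injOn
  have hEq : EqOn (fun u : ℝ => |(-Real.exp (-u))| • H (Real.exp (-u)))
      (fun u : ℝ => u ^ (p + 1/2) * Real.exp (-((3/2 - p) * u))) (Ioi 0) := by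
    intro u _
    simp only [hH, smul_eq_mul, abs_neg, abs_of_pos (Real.exp_pos _)]
    rw [Real.rpow_def_of_pos (Real.exp_pos _), Real.log_exp, neg_neg]
    rw [show Real.exp (-u) * (Real.exp (-u * (1/2 - p)) * u ^ (p + 1/2))
        = (Real.exp (-u) * Real.exp (-u * (1/2 - p))) * u ^ (p + 1/2) by ring,
      ← Real.exp_add]
    ring_nf
  obtain ⟨hInt, hVal⟩ := gamma_side p hp1 hp2
  constructor
  · rw [← himg]
    rw [integrableOn_image_iff_integrableOn_abs_deriv_smul measurableSet_Ioi hderiv hinj H]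
    exact IntegrableOn.congr_fun hInt (fun u hu => (hEq hu).symm) measurableSet_Ioi
  · have h := integral_image_eq_integral_abs_deriv_smul measurableSet_Ioi hderiv hinj H
    rw [himg] at h
    rw [h, setIntegral_congr_fun measurableSet_Ioi hEq, hVal]

/-- Transfer from `Ioo 0 1` to `Ioo (-1) 0` by negation. -/
lemma outer_side (p : ℝ) (hp1 : 1 < p) (hp2 : p < 3 / 2) :
    IntegrableOn (fun s : ℝ => (-s) ^ (1/2 - p) * (-Real.log (-s)) ^ (p + 1/2)) (Ioo (-1) 0) ∧
    ∫ s in Ioo (-1:ℝ) 0, (-s) ^ (1/2 - p) * (-Real.log (-s)) ^ (p + 1/2)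
      = Real.Gamma (p + 3/2) / (3/2 - p) ^ (p + 3/2) := by
  set G : ℝ → ℝ := fun s => (-s) ^ (1/2 - p) * (-Real.log (-s)) ^ (p + 1/2) with hG
  have himg : (fun x : ℝ => -x) '' Ioo 0 1 = Ioo (-1) 0 := by
    ext x
    simp only [mem_image, mem_Ioo]
    constructor
    · rintro ⟨y, ⟨h1, h2⟩, rfl⟩; constructor <;> linarith
    · rintro ⟨h1, h2⟩; exact ⟨-x, ⟨by linarith, by linarith⟩, by ring⟩
  have hderiv : ∀ u ∈ Ioo (0:ℝ) 1, HasDerivWithinAt (fun x : ℝ => -x) (-1 : ℝ) (Ioo 0 1) u :=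
    fun u _ => (hasDerivAt_neg u).hasDerivWithinAt
  have hinj : InjOn (fun x : ℝ => -x) (Ioo 0 1) := neg_injective.injOn
  have hEq : EqOn (fun u : ℝ => |(-1 : ℝ)| • G (-u))
      (fun σ : ℝ => σ ^ (1/2 - p) * (-Real.log σ) ^ (p + 1/2)) (Ioo 0 1) := by
    intro u _
    simp [hG]
  obtain ⟨hInt, hVal⟩ := sigma_side p hp1 hp2
  constructor
  · have h := integrableOn_image_iff_integrableOn_abs_deriv_smul measurableSet_Ioo hderiv hinj G
    rw [himg] at h
    rw [h]
    exact IntegrableOn.congr_fun hInt (fun u hu => (hEq hu).symm) measurableSet_Ioo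
  · have h := integral_image_eq_integral_abs_deriv_smul measurableSet_Ioo hderiv hinj G
    rw [himg] at h
    rw [h, setIntegral_congr_fun measurableSet_Ioo hEq, hVal]

/-- Description of the sections of the heat ball. -/
lemma heat_ball_section {s : ℝ} (hs : s ∈ Ioo (-1:ℝ) 0) :
    {t : ℝ | (s, t) ∈ unitHeatBall}
      = Ioo (-(Real.sqrt (2 * s * Real.log (-s)))) (Real.sqrt (2 * s * Real.log (-s))) := by
  ext t
  simp only [unitHeatBall, mem_setOf_eq, mem_Ioo, hs.1, hs.2, true_and]
  rw [Real.sq_lt]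

lemma inner_value (p : ℝ) (hp1 : 1 < p) {s : ℝ} (hs : s ∈ Ioo (-1:ℝ) 0) :
    ∫ t in Ioo (-(Real.sqrt (2 * s * Real.log (-s)))) (Real.sqrt (2 * s * Real.log (-s))),
      (t ^ 2 / s ^ 2) ^ p
    = 2 ^ (p + 3/2) / (2 * p + 1)
        * ((-s) ^ (1/2 - p) * (-Real.log (-s)) ^ (p + 1/2)) := by
  obtain ⟨hs1, hs0⟩ := hs
  set σ : ℝ := -s with hσdef
  have hσ : 0 < σ := by rw [hσdef]; linarith
  have hσ1 : σ < 1 := by rw [hσdef]; linarith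
  have hL : 0 < -Real.log σ := by
    have := Real.log_neg hσ hσ1; linarith
  have hb : (0:ℝ) < 2 * s * Real.log (-s) := by
    have hlog : Real.log (-s) < 0 := by
      rw [show -s = σ from rfl]; exact Real.log_neg hσ hσ1
    have : 0 < s * Real.log (-s) := mul_pos_of_neg_of_neg hs0 hlog
    linarith
  set b : ℝ := 2 * s * Real.log (-s) with hbdef
  set a : ℝ := Real.sqrt b with hadef
  have ha : 0 < a := Real.sqrt_pos.mpr hb
  have hcont : Continuous fun t : ℝ => (t ^ 2 / s ^ 2) ^ p := by
    apply Continuous.rpow_const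
    · exact (continuous_pow 2).div_const _
    · intro x; right; linarith
  have heven : ∀ t : ℝ, ((-t) ^ 2 / s ^ 2) ^ p = (t ^ 2 / s ^ 2) ^ p := by
    intro t; rw [neg_pow]; norm_num
  have step1 : ∫ t in Ioo (-a) a, (t ^ 2 / s ^ 2) ^ p
      = ∫ t in (-a)..a, (t ^ 2 / s ^ 2) ^ p := by
    rw [intervalIntegral.integral_of_le (by linarith), integral_Ioc_eq_integral_Ioo]
  have step2 : ∫ t in (-a)..a, (t ^ 2 / s ^ 2) ^ p
      = 2 * ∫ t in (0:ℝ)..a, (t ^ 2 / s ^ 2) ^ p :=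
    even_intervalIntegral hcont heven a
  have step3 : ∫ t in (0:ℝ)..a, (t ^ 2 / s ^ 2) ^ p
      = (∫ t in (0:ℝ)..a, t ^ (2 * p)) / (s ^ 2) ^ p := by
    rw [← intervalIntegral.integral_div]
    apply intervalIntegral.integral_congr
    intro t ht
    rw [uIcc_of_le (by linarith)] at ht
    have ht0 : 0 ≤ t := ht.1
    show (t ^ 2 / s ^ 2) ^ p = t ^ (2 * p) / (s ^ 2) ^ p
    rw [Real.div_rpow (sq_nonneg t) (sq_nonneg s)]
    congr 1
    rw [← Real.rpow_natCast t 2, ← Real.rpow_mul ht0]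
    norm_num
  have step4 : ∫ t in (0:ℝ)..a, t ^ (2 * p) = a ^ (2 * p + 1) / (2 * p + 1) := by
    rw [integral_rpow (Or.inl (by linarith))]
    rw [Real.zero_rpow (by linarith), sub_zero]
  have hb_eq : b = 2 * (σ * (-Real.log σ)) := by
    rw [hbdef, show -s = σ from rfl, hσdef]; ring
  have ha_pow : a ^ (2 * p + 1)
      = 2 ^ (p + 1/2) * (σ ^ (p + 1/2) * (-Real.log σ) ^ (p + 1/2)) := by
    rw [hadef, Real.sqrt_eq_rpow, ← Real.rpow_mul hb.le,
      show (1/2 : ℝ) * (2 * p + 1) = p + 1/2 by ring, hb_eq,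
      Real.mul_rpow (by norm_num) (by positivity),
      Real.mul_rpow hσ.le hL.le]
  have hs_pow : (s ^ 2 : ℝ) ^ p = σ ^ (2 * p) := by
    rw [show (s^2 : ℝ) = σ ^ 2 by rw [hσdef]; ring]
    rw [← Real.rpow_natCast σ 2, ← Real.rpow_mul hσ.le]
    norm_num
  have hfrac : σ ^ (p + 1/2) / σ ^ (2 * p) = σ ^ (1/2 - p) := by
    rw [← Real.rpow_sub hσ]
    norm_num
    ring_nf
  have h2pow : (2:ℝ) * 2 ^ (p + 1/2) = 2 ^ (p + 3/2) := by
    rw [show (p + 3/2 : ℝ) = (p + 1/2) + 1 by ring,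
      Real.rpow_add_one (by norm_num : (2:ℝ) ≠ 0)]
    ring
  rw [step1, step2, step3, step4, ha_pow, hs_pow]
  have hden1 : (2 * p + 1 : ℝ) ≠ 0 := by linarith
  have hden2 : (σ ^ (2 * p) : ℝ) ≠ 0 := (Real.rpow_pos_of_pos hσ _).ne'
  rw [← h2pow, ← hfrac]
  field_simp

/-- The `L^p` norm of the heat-ball weight `t²/s²`: for `1 < p < 3/2`,
`∫_{E₁} (t²/s²)^p = (2^{p+3/2}/(2p+1)) Γ(p+3/2)/(3/2-p)^{p+3/2}`. -/
theorem heat_ball_weight_integral (p : ℝ) (hp1 : 1 < p) (hp2 : p < 3 / 2) :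
    IntegrableOn (fun q : ℝ × ℝ => (q.2 ^ 2 / q.1 ^ 2) ^ p) unitHeatBall ∧
    ∫ q in unitHeatBall, (q.2 ^ 2 / q.1 ^ 2) ^ p
      = 2 ^ (p + 3 / 2) / (2 * p + 1)
        * (Real.Gamma (p + 3 / 2) / (3 / 2 - p) ^ (p + 3 / 2)) := by
  set g : ℝ × ℝ → ℝ := fun q => (q.2 ^ 2 / q.1 ^ 2) ^ p with hgdef
  set C : ℝ := 2 ^ (p + 3/2) / (2 * p + 1) with hCdef
  set G : ℝ → ℝ := fun s => (-s) ^ (1/2 - p) * (-Real.log (-s)) ^ (p + 1/2) with hGdef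
  obtain ⟨hG_int, hG_val⟩ := outer_side p hp1 hp2
  have hA : MeasurableSet unitHeatBall := by
    have : unitHeatBall = {q : ℝ × ℝ | -1 < q.1} ∩ {q | q.1 < 0}
        ∩ {q | q.2 ^ 2 < 2 * q.1 * Real.log (-q.1)} := by
      ext q; simp [unitHeatBall, and_assoc]
    rw [this]
    exact ((measurableSet_lt measurable_const measurable_fst).inter
        (measurableSet_lt measurable_fst measurable_const)).inter
      (measurableSet_lt (measurable_snd.pow_const 2)
        ((measurable_const.mul measurable_fst).mul
          (Real.measurable_log.comp measurable_fst.neg)))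
  have hg_meas : Measurable g :=
    ((measurable_snd.pow_const 2).div (measurable_fst.pow_const 2)).pow measurable_const
  have hg_nonneg : ∀ q, 0 ≤ g q := fun q => Real.rpow_nonneg (by positivity) _
  have hGnonneg : ∀ s ∈ Ioo (-1:ℝ) 0, 0 ≤ C * G s := by
    intro s hs
    have h1 : (0:ℝ) ≤ -s := by linarith [hs.2]
    have h2 : Real.log (-s) < 0 := Real.log_neg (by linarith [hs.2]) (by linarith [hs.1])
    have hC : 0 ≤ C := by rw [hCdef]; positivity
    exact mul_nonneg hC (mul_nonneg (Real.rpow_nonneg h1 _)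
      (Real.rpow_nonneg (by linarith) _))
  have hCG_int : IntegrableOn (fun s => C * G s) (Ioo (-1:ℝ) 0) := hG_int.const_mul C
  have hCG_ae : 0 ≤ᵐ[volume.restrict (Ioo (-1:ℝ) 0)] fun s => C * G s :=
    (ae_restrict_iff' measurableSet_Ioo).2 (ae_of_all _ hGnonneg)
  have hsec_meas : ∀ s : ℝ, MeasurableSet {t : ℝ | (s, t) ∈ unitHeatBall} :=
    fun s => hA.preimage measurable_prodMk_left
  have inner : ∀ s : ℝ,
      (∫⁻ t, (unitHeatBall.indicator fun q => ENNReal.ofReal (g q)) (s, t))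
        = ENNReal.ofReal (((Ioo (-1:ℝ) 0).indicator fun s => C * G s) s) := by
    intro s
    have hrw : (fun t : ℝ => (unitHeatBall.indicator fun q => ENNReal.ofReal (g q)) (s, t))
        = fun t : ℝ => ({t : ℝ | (s, t) ∈ unitHeatBall}.indicator
            fun t => ENNReal.ofReal (g (s, t))) t := by
      funext t
      rfl
    rw [hrw, lintegral_indicator (hsec_meas s)]
    by_cases hs : s ∈ Ioo (-1:ℝ) 0
    · rw [heat_ball_section hs, Set.indicator_of_mem hs]
      have hcont : Continuous fun t : ℝ => ((t:ℝ) ^ 2 / s ^ 2) ^ p :=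
        Continuous.rpow_const ((continuous_pow 2).div_const _)
          (fun x => Or.inr (by linarith))
      have hint : IntegrableOn (fun t : ℝ => ((t:ℝ) ^ 2 / s ^ 2) ^ p)
          (Ioo (-(Real.sqrt (2 * s * Real.log (-s)))) (Real.sqrt (2 * s * Real.log (-s)))) :=
        (hcont.integrableOn_Icc).mono_set Ioo_subset_Icc_self
      have hofr := ofReal_integral_eq_lintegral_ofReal hint
        (ae_of_all _ fun t => Real.rpow_nonneg (by positivity) _)
      have : (∫⁻ t in Ioo (-(Real.sqrt (2 * s * Real.log (-s))))
            (Real.sqrt (2 * s * Real.log (-s))), ENNReal.ofReal (g (s, t)))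
          = ∫⁻ t in Ioo (-(Real.sqrt (2 * s * Real.log (-s))))
            (Real.sqrt (2 * s * Real.log (-s))), ENNReal.ofReal (((t:ℝ) ^ 2 / s ^ 2) ^ p) := rfl
      rw [this, ← hofr, inner_value p hp1 hs]
    · have hempty : {t : ℝ | (s, t) ∈ unitHeatBall} = ∅ := by
        ext t
        simp only [unitHeatBall, mem_setOf_eq, mem_empty_iff_false, iff_false, not_and]
        intro h1 h2
        exact absurd ⟨h1, h2⟩ hs
      rw [hempty, Set.indicator_of_notMem hs]
      simp
  have key : (∫⁻ q in unitHeatBall, ENNReal.ofReal (g q))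
      = ENNReal.ofReal (∫ s in Ioo (-1:ℝ) 0, C * G s) := by
    rw [← lintegral_indicator hA, Measure.volume_eq_prod,
      lintegral_prod _ ((hg_meas.ennreal_ofReal).indicator hA).aemeasurable]
    rw [lintegral_congr inner]
    have hswap : ∀ s : ℝ, ENNReal.ofReal (((Ioo (-1:ℝ) 0).indicator fun s => C * G s) s)
        = (Ioo (-1:ℝ) 0).indicator (fun s => ENNReal.ofReal (C * G s)) s := by
      intro s
      by_cases h : s ∈ Ioo (-1:ℝ) 0 <;> simp [h]
    rw [lintegral_congr hswap, lintegral_indicator measurableSet_Ioo,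
      ← ofReal_integral_eq_lintegral_ofReal hCG_int hCG_ae]
  have hval : (∫ s in Ioo (-1:ℝ) 0, C * G s) = C * (Real.Gamma (p + 3/2) / (3/2 - p) ^ (p + 3/2)) := by
    rw [integral_const_mul, hG_val]
  have hint_final : IntegrableOn g unitHeatBall := by
    refine ⟨hg_meas.aestronglyMeasurable.restrict, ?_⟩
    rw [hasFiniteIntegral_iff_ofReal (ae_of_all _ hg_nonneg)]
    exact key ▸ ENNReal.ofReal_lt_top
  refine ⟨hint_final, ?_⟩
  rw [integral_eq_lintegral_of_nonneg_ae (ae_of_all _ hg_nonneg)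
    hg_meas.aestronglyMeasurable.restrict, key,
    ENNReal.toReal_ofReal (setIntegral_nonneg measurableSet_Ioo hGnonneg), hval]
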